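/- Let F/C be a field extension and a, a' ∈ F^n tuples with a' ∈ locus(a/C) and trdeg(C(a)/C) ≤ trdeg(C(a')/C). Then there is a C-algebra isomorphism ρ: C(a) → C(a') with ρ(a_i) = a'_i for each i. -/

import Mathlib

open MvPolynomial

section Aux

variable {C F : Type*} [Field C] [Field F] [Algebra C F] {n : ℕ}

theorem locus_transfer (a a' : Fin n → F)
    (hloc : ∀ f : MvPolynomial (Fin n) C, aeval a f = 0 → aeval a' f = 0)
    (t : Finset (Fin n))
    (h : AlgebraicIndependent C (fun i : {j // j ∈ t} => a' i.1)) :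
    AlgebraicIndependent C (fun i : {j // j ∈ t} => a i.1) := by
  rw [algebraicIndependent_iff] at h ⊢
  intro p hp
  apply h
  have h1 : aeval a (rename (Subtype.val) p) = 0 := by
    rw [aeval_rename]; exact hp
  have h2 := hloc _ h1
  rw [aeval_rename] at h2
  exact h2

set_option maxHeartbeats 1000000 in
theorem ker_le_ker (a a' : Fin n → F)
    (hloc : ∀ f : MvPolynomial (Fin n) C, aeval a f = 0 → aeval a' f = 0)
    (htr : ∀ s : Finset (Fin n),
      AlgebraicIndependent C (fun i : {j // j ∈ s} => a i.1) →
      ∃ t : Finset (Fin n), s.card ≤ t.card ∧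
        AlgebraicIndependent C (fun i : {j // j ∈ t} => a' i.1))
    (g : MvPolynomial (Fin n) C) (hg : aeval a' g = 0) : aeval a g = 0 := by
  classical
  by_contra hb
  set b : F := aeval a g with hbdef
  -- the collection of independent subsets
  set S : Finset (Finset (Fin n)) := (Finset.univ : Finset (Fin n)).powerset.filter
    (fun s => AlgebraicIndependent C (fun i : {j // j ∈ s} => a i.1)) with hS
  have hSne : S.Nonempty := by
    refine ⟨∅, Finset.mem_filter.2 ⟨Finset.mem_powerset.2 (Finset.empty_subset _), ?_⟩⟩
    haveI : IsEmpty {j // j ∈ (∅ : Finset (Fin n))} :=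
      ⟨fun x => absurd x.2 (Finset.notMem_empty _)⟩
    exact algebraicIndependent_empty_type
  obtain ⟨s, hsS, hsmax⟩ := S.exists_max_image Finset.card hSne
  obtain ⟨t, hst, ht'⟩ := htr s (Finset.mem_filter.1 hsS).2
  have hta : AlgebraicIndependent C (fun i : {j // j ∈ t} => a i.1) :=
    locus_transfer a a' hloc t ht'
  have htmax : ∀ u : Finset (Fin n),
      AlgebraicIndependent C (fun i : {j // j ∈ u} => a i.1) → u.card ≤ t.card := by
    intro u hu
    have : u ∈ S := Finset.mem_filter.2 ⟨Finset.mem_powerset.2 (Finset.subset_univ _), hu⟩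
    exact (hsmax u this).trans hst
  set av : {j // j ∈ t} → F := fun j => a j.1 with havdef
  set av' : {j // j ∈ t} → F := fun j => a' j.1 with hav'def
  set K0 : IntermediateField C F := IntermediateField.adjoin C (Set.range av) with hK0
  -- every a i is algebraic over K0
  have halg : ∀ i : Fin n, IsAlgebraic K0 (a i) := by
    intro i
    by_cases hit : i ∈ t
    · have hmem : a i ∈ K0 :=
        IntermediateField.subset_adjoin C (Set.range av) ⟨⟨i, hit⟩, rfl⟩
      have : algebraMap K0 F ⟨a i, hmem⟩ = a i := rfl
      exact this ▸ isAlgebraic_algebraMap (⟨a i, hmem⟩ : K0)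
    · have hdep : ¬ AlgebraicIndependent C
          (fun o : Option {j // j ∈ t} => o.elim (a i) av) := by
        intro hopt
        set e : {j // j ∈ insert i t} → Option {j // j ∈ t} :=
          fun j => if h : j.1 ∈ t then some ⟨j.1, h⟩ else none with he
        have hinj : Function.Injective e := by
          rintro ⟨x, hx⟩ ⟨y, hy⟩ hxy
          apply Subtype.ext
          show x = y
          by_cases h1 : x ∈ t <;> by_cases h2 : y ∈ t
          · simpa [he, h1, h2, Subtype.ext_iff] using hxy
          · simp [he, h1, h2] at hxy
          · simp [he, h1, h2] at hxy
          · have hx' : x = i := (Finset.mem_insert.1 hx).resolve_right h1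
            have hy' : y = i := (Finset.mem_insert.1 hy).resolve_right h2
            rw [hx', hy']
        have hcomp : (fun o : Option {j // j ∈ t} => o.elim (a i) av) ∘ e
            = fun j : {j // j ∈ insert i t} => a j.1 := by
          funext j
          by_cases h : j.1 ∈ t
          · simp [he, h, havdef]
          · have : j.1 = i := by
              rcases Finset.mem_insert.1 j.2 with h' | h'
              · exact h'
              · exact absurd h' h
            simp [he, h, this, hit]
        have hind : AlgebraicIndependent C (fun j : {j // j ∈ insert i t} => a j.1) := by
          rw [← hcomp]; exact hopt.comp e hinj
        have := htmax _ hind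
        rw [Finset.card_insert_of_notMem hit] at this
        omega
      have h3 : ¬ Transcendental (Algebra.adjoin C (Set.range av)) (a i) := fun h =>
        hdep ((hta.option_iff_transcendental (a i)).2 h)
      rw [Transcendental, not_not] at h3
      letI : Algebra (Algebra.adjoin C (Set.range av)) K0 :=
        (Subalgebra.inclusion (IntermediateField.algebra_adjoin_le_adjoin C
          (Set.range av))).toRingHom.toAlgebra
      haveI : IsScalarTower (Algebra.adjoin C (Set.range av)) K0 F :=
        IsScalarTower.of_algebraMap_eq (congrFun rfl)
      have hinj0 : Function.Injective (algebraMap (Algebra.adjoin C (Set.range av)) K0) :=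
        fun x y hxy => Subtype.ext (show (x : F) = (y : F) from congrArg (fun z : K0 => (z : F)) hxy)
      exact h3.extendScalars hinj0
  -- b is integral over K0
  have hbint : IsIntegral K0 b := by
    have hmem : b ∈ IntermediateField.adjoin K0 (Set.range a) := by
      apply IntermediateField.algebra_adjoin_le_adjoin
      rw [Algebra.adjoin_range_eq_range_aeval]
      refine ⟨MvPolynomial.map (algebraMap C K0) g, ?_⟩
      show aeval a (MvPolynomial.map (algebraMap C K0) g) = b
      rw [aeval_map_algebraMap]
    haveI halgadj : Algebra.IsAlgebraic K0 (IntermediateField.adjoin K0 (Set.range a)) :=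
      IntermediateField.isAlgebraic_adjoin (by
        rintro x ⟨i, rfl⟩
        exact (halg i).isIntegral)
    have h1 : IsIntegral K0 (⟨b, hmem⟩ : IntermediateField.adjoin K0 (Set.range a)) :=
      (halgadj.isAlgebraic _).isIntegral
    exact h1.map (IntermediateField.adjoin K0 (Set.range a)).val
  set p := minpoly K0 b with hp
  have hc0 : p.coeff 0 ≠ 0 := minpoly.coeff_zero_ne_zero hbint hb
  have hev : ∑ k ∈ Finset.range (p.natDegree + 1), ((p.coeff k : F)) * b ^ k = 0 := by
    have := minpoly.aeval K0 b
    rw [Polynomial.aeval_eq_sum_range] at this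
    simpa [Algebra.smul_def] using this
  -- representation of coefficients
  have hrep : ∀ k : ℕ, ∃ r s : MvPolynomial {j // j ∈ t} C,
      ((p.coeff k : F)) * aeval av s = aeval av r ∧ aeval av s ≠ 0 := by
    intro k
    have hmem : ((p.coeff k : F)) ∈ IntermediateField.adjoin C (Set.range av) :=
      (p.coeff k).2
    rw [IntermediateField.mem_adjoin_range_iff] at hmem
    obtain ⟨r, s, hrs⟩ := hmem
    by_cases hs : aeval av s = 0
    · refine ⟨0, 1, ?_, ?_⟩
      · rw [hrs, hs, div_zero, zero_mul, map_zero]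
      · rw [map_one]; exact one_ne_zero
    · exact ⟨r, s, by rw [hrs, div_mul_cancel₀ _ hs], hs⟩
  choose r s hrs hsne using hrep
  set D := Finset.range (p.natDegree + 1) with hD
  set G : MvPolynomial (Fin n) C :=
    ∑ k ∈ D, rename Subtype.val (r k * ∏ j ∈ D.erase k, s j) * g ^ k with hG
  have haG : aeval a G = 0 := by
    rw [hG, map_sum]
    have hterm : ∀ k ∈ D, aeval a (rename Subtype.val (r k * ∏ j ∈ D.erase k, s j) * g ^ k)
        = (∏ j ∈ D, aeval av (s j)) * (((p.coeff k : F)) * b ^ k) := by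
      intro k hk
      rw [map_mul, map_pow, aeval_rename, map_mul, map_prod]
      have hcv : (aeval (a ∘ Subtype.val) : MvPolynomial {j // j ∈ t} C →ₐ[C] F) = aeval av := rfl
      rw [hcv, ← hrs k, ← Finset.mul_prod_erase D (fun j => aeval av (s j)) hk]
      ring
    rw [Finset.sum_congr rfl hterm, ← Finset.mul_sum, hev, mul_zero]
  have haG' := hloc G haG
  -- evaluate at a'
  have hzero : aeval (a' ∘ Subtype.val) (r 0 * ∏ j ∈ D.erase 0, s j) = 0 := by
    rw [hG, map_sum] at haG'
    have h0D : (0 : ℕ) ∈ D := Finset.mem_range.2 (Nat.succ_pos _)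
    rw [Finset.sum_eq_single_of_mem 0 h0D] at haG'
    · rw [map_mul, map_pow, hg, pow_zero, mul_one, aeval_rename] at haG'
      exact haG'
    · intro k hk hk0
      rw [map_mul, map_pow, hg, zero_pow hk0, mul_zero]
  have hinj' : Function.Injective (aeval av' : MvPolynomial {j // j ∈ t} C →ₐ[C] F) :=
    algebraicIndependent_iff_injective_aeval.1 ht'
  have hcv' : aeval (a' ∘ Subtype.val) = (aeval av' : MvPolynomial {j // j ∈ t} C →ₐ[C] F) := rfl
  rw [hcv', map_mul, map_prod] at hzero
  rcases mul_eq_zero.1 hzero with h | h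
  · have hr0 : r 0 = 0 := by
      apply hinj'
      rw [h, map_zero]
    have := hrs 0
    rw [hr0, map_zero] at this
    rcases mul_eq_zero.1 this with h' | h'
    · exact hc0 (by exact_mod_cast Subtype.ext h')
    · exact hsne 0 h'
  · obtain ⟨j, hj, hj0⟩ := Finset.prod_eq_zero_iff.1 h
    apply hsne j
    have : s j = 0 := by
      apply hinj'
      rw [hj0, map_zero]
    rw [this, map_zero]

end Aux

set_option maxHeartbeats 1000000 in
theorem equiv_of_two_embeddings {C F A : Type*} [Field C] [Field F] [Algebra C F]
    [CommRing A] [IsDomain A] [Algebra C A]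
    (ψ ψ' : A →ₐ[C] F) (hinj : Function.Injective ψ) (hinj' : Function.Injective ψ')
    {sa sa' : Set F} (hr : ψ.range = Algebra.adjoin C sa)
    (hr' : ψ'.range = Algebra.adjoin C sa') :
    ∃ ρ : IntermediateField.adjoin C sa ≃ₐ[C] IntermediateField.adjoin C sa',
      ∀ (x : A) (hx : ψ x ∈ IntermediateField.adjoin C sa),
        (ρ ⟨ψ x, hx⟩ : F) = ψ' x := by
  set K := FractionRing A with hK
  set f : K →ₐ[C] F := IsFractionRing.liftAlgHom (K := K) hinj with hf
  set f' : K →ₐ[C] F := IsFractionRing.liftAlgHom (K := K) hinj' with hf'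
  have hfr : f.fieldRange = IntermediateField.adjoin C sa :=
    IsFractionRing.liftAlgHom_fieldRange_eq_of_range_eq hinj hr
  have hfr' : f'.fieldRange = IntermediateField.adjoin C sa' :=
    IsFractionRing.liftAlgHom_fieldRange_eq_of_range_eq hinj' hr'
  set e : K ≃ₐ[C] IntermediateField.adjoin C sa :=
    (show K ≃ₐ[C] f.fieldRange from AlgEquiv.ofInjectiveField f).trans
      (IntermediateField.equivOfEq hfr) with he
  set e' : K ≃ₐ[C] IntermediateField.adjoin C sa' :=
    (show K ≃ₐ[C] f'.fieldRange from AlgEquiv.ofInjectiveField f').trans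
      (IntermediateField.equivOfEq hfr') with he'
  have hecoe : ∀ z : K, (e z : F) = f z := fun z => rfl
  have he'coe : ∀ z : K, (e' z : F) = f' z := fun z => rfl
  refine ⟨e.symm.trans e', ?_⟩
  intro x hx
  have hfx : f (algebraMap A K x) = ψ x := by
    rw [hf, IsFractionRing.liftAlgHom_apply, IsFractionRing.lift_algebraMap]
    rfl
  have hf'x : f' (algebraMap A K x) = ψ' x := by
    rw [hf', IsFractionRing.liftAlgHom_apply, IsFractionRing.lift_algebraMap]
    rfl
  have he_x : e (algebraMap A K x) = ⟨ψ x, hx⟩ := by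
    apply Subtype.ext
    rw [hecoe, hfx]
  show (e' (e.symm ⟨ψ x, hx⟩) : F) = ψ' x
  rw [← he_x, AlgEquiv.symm_apply_apply, he'coe, hf'x]


/-- The locus of a tuple `u` over `C`: the set of tuples `w` such that every polynomial
over `C` vanishing at `u` also vanishes at `w`. -/
def fieldLocus (C F : Type*) [Field C] [Field F] [Algebra C F] {m : ℕ}
    (u : Fin m → F) : Set (Fin m → F) :=
  {w | ∀ f : MvPolynomial (Fin m) C,
    MvPolynomial.aeval u f = 0 → MvPolynomial.aeval w f = 0}

/-- If `a' ∈ locus(a/C)` and `trdeg(C(a)/C) ≤ trdeg(C(a')/C)` (expressed as: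
every algebraically independent subtuple of `a` is matched in size by one of `a'`), then
there is a `C`-algebra isomorphism `C(a) ≃ C(a')` sending `a_i` to `a'_i`. -/
theorem exists_algEquiv_of_mem_locus
    (C F : Type*) [Field C] [Field F] [Algebra C F] {n : ℕ}
    (a a' : Fin n → F) (hloc : a' ∈ fieldLocus C F a)
    (htr : ∀ s : Finset (Fin n),
      AlgebraicIndependent C (fun i : {j // j ∈ s} => a i.1) →
      ∃ t : Finset (Fin n), s.card ≤ t.card ∧
        AlgebraicIndependent C (fun i : {j // j ∈ t} => a' i.1)) :
    ∃ ρ : IntermediateField.adjoin C (Set.range a) ≃ₐ[C]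
        IntermediateField.adjoin C (Set.range a'),
      ∀ i : Fin n,
        (ρ ⟨a i, IntermediateField.subset_adjoin C (Set.range a) ⟨i, rfl⟩⟩ : F) = a' i := by
  classical
  have hloc' : ∀ f : MvPolynomial (Fin n) C, aeval a f = 0 → aeval a' f = 0 := hloc
  have hker : ∀ f : MvPolynomial (Fin n) C, aeval a f = 0 ↔ aeval a' f = 0 := fun f =>
    ⟨hloc' f, fun h => ker_le_ker a a' hloc' htr f h⟩
  set φ : MvPolynomial (Fin n) C →ₐ[C] F := aeval a with hφ
  set φ' : MvPolynomial (Fin n) C →ₐ[C] F := aeval a' with hφ'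
  have hII' : RingHom.ker φ = RingHom.ker φ' := by
    ext f
    simpa only [RingHom.mem_ker] using hker f
  set ψ : (MvPolynomial (Fin n) C ⧸ RingHom.ker φ) →ₐ[C] F := Ideal.kerLiftAlg φ with hψ
  set ψ' : (MvPolynomial (Fin n) C ⧸ RingHom.ker φ) →ₐ[C] F :=
    (Ideal.kerLiftAlg φ').comp (Ideal.quotientEquivAlgOfEq C hII').toAlgHom with hψ'
  have hψinj : Function.Injective ψ := Ideal.kerLiftAlg_injective φ
  have hψ'inj : Function.Injective ψ' :=
    (Ideal.kerLiftAlg_injective φ').comp (Ideal.quotientEquivAlgOfEq C hII').injective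
  have hψmk : ∀ x, ψ (Ideal.Quotient.mk _ x) = φ x := fun x => Ideal.kerLiftAlg_mk φ x
  have hψ'mk : ∀ x, ψ' (Ideal.Quotient.mk _ x) = φ' x := by
    intro x
    show Ideal.kerLiftAlg φ' (Ideal.quotientEquivAlgOfEq C hII' (Ideal.Quotient.mk _ x)) = φ' x
    rw [Ideal.quotientEquivAlgOfEq_mk, Ideal.kerLiftAlg_mk]
  haveI : IsDomain (MvPolynomial (Fin n) C ⧸ RingHom.ker φ) :=
    Function.Injective.isDomain ψ.toRingHom hψinj
  have hrange : ψ.range = Algebra.adjoin C (Set.range a) := by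
    rw [Algebra.adjoin_range_eq_range_aeval C a]
    ext y
    simp only [AlgHom.mem_range]
    constructor
    · rintro ⟨x, rfl⟩
      obtain ⟨r, rfl⟩ := Ideal.Quotient.mk_surjective x
      exact ⟨r, (hψmk r).symm⟩
    · rintro ⟨r, rfl⟩
      exact ⟨Ideal.Quotient.mk _ r, hψmk r⟩
  have hrange' : ψ'.range = Algebra.adjoin C (Set.range a') := by
    rw [Algebra.adjoin_range_eq_range_aeval C a']
    ext y
    simp only [AlgHom.mem_range]
    constructor
    · rintro ⟨x, rfl⟩
      obtain ⟨r, rfl⟩ := Ideal.Quotient.mk_surjective x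
      exact ⟨r, (hψ'mk r).symm⟩
    · rintro ⟨r, rfl⟩
      exact ⟨Ideal.Quotient.mk _ r, hψ'mk r⟩
  obtain ⟨ρ, hρ⟩ := equiv_of_two_embeddings ψ ψ' hψinj hψ'inj hrange hrange'
  refine ⟨ρ, fun i => ?_⟩
  have h1 : ψ (Ideal.Quotient.mk _ (MvPolynomial.X i)) = a i := by
    rw [hψmk]; simp [hφ]
  have h2 : ψ' (Ideal.Quotient.mk _ (MvPolynomial.X i)) = a' i := by
    rw [hψ'mk]; simp [hφ']
  have hx : ψ (Ideal.Quotient.mk _ (MvPolynomial.X i))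
      ∈ IntermediateField.adjoin C (Set.range a) := by
    rw [h1]; exact IntermediateField.subset_adjoin C (Set.range a) ⟨i, rfl⟩
  have hsub : (⟨a i, IntermediateField.subset_adjoin C (Set.range a) ⟨i, rfl⟩⟩ :
      IntermediateField.adjoin C (Set.range a))
      = ⟨ψ (Ideal.Quotient.mk _ (MvPolynomial.X i)), hx⟩ := Subtype.ext h1.symm
  rw [hsub, hρ _ hx, h2]
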